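/- Barrier thin set theorem: Let B be a barrier on an infinite set X ⊆ ℕ. For every f : B → ℕ there exists an infinite H ⊆ X such that the image of f restricted to B|H = { s ∈ B : s ⊆ H } is not all of ℕ. -/

import Mathlib

/-- `s` is an initial segment of `Y` with respect to the increasing enumeration:
`s ⊆ Y` and every element of `Y` not in `s` is larger than every element of `s`. -/
def IsInitSeg (s : Finset ℕ) (Y : Set ℕ) : Prop :=
  ↑s ⊆ Y ∧ ∀ y ∈ Y, y ∉ s → ∀ x ∈ s, x < y

/-- `B` is a barrier on `X`: (Base) the union of elements of `B` is `X`;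
(Sperner) no element of `B` is a proper subset of another; (Density) every
infinite subset of `X` has an initial segment in `B`. -/
def IsBarrierOn (B : Set (Finset ℕ)) (X : Set ℕ) : Prop :=
  (⋃ s ∈ B, (s : Set ℕ)) = X ∧
  (∀ s ∈ B, ∀ t ∈ B, ¬ s ⊂ t) ∧
  (∀ Y : Set ℕ, Y ⊆ X → Y.Infinite → ∃ s ∈ B, IsInitSeg s Y)

/-- `s` contains no member of `B`. -/
def BFree (B : Set (Finset ℕ)) (s : Finset ℕ) : Prop := ∀ b ∈ B, ¬ b ⊆ s

/-- One-element end-extension of a `B`-free set, within `X`. -/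
def ExtRel (B : Set (Finset ℕ)) (X : Set ℕ) (t s : Finset ℕ) : Prop :=
  BFree B s ∧ ↑s ⊆ X ∧ ∃ n ∈ X, (∀ x ∈ s, x < n) ∧ t = insert n s

lemma extRel_wf (B : Set (Finset ℕ)) (X : Set ℕ) (hB : IsBarrierOn B X) :
    WellFounded (ExtRel B X) := by
  by_contra hwf
  obtain ⟨x, hx⟩ : ∃ x, ¬ Acc (ExtRel B X) x := by
    by_contra h; push_neg at h; exact hwf ⟨h⟩
  have step : ∀ y : {a // ¬ Acc (ExtRel B X) a},
      ∃ z : {a // ¬ Acc (ExtRel B X) a}, ExtRel B X z.1 y.1 := by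
    rintro ⟨y, hy⟩
    obtain ⟨z, hz1, hz2⟩ := exists_not_acc_lt_of_not_acc hy
    exact ⟨⟨z, hz1⟩, hz2⟩
  choose F hF using step
  set a : ℕ → Finset ℕ := fun k => (F^[k] ⟨x, hx⟩).1 with ha
  have hr : ∀ k, ExtRel B X (a (k+1)) (a k) := by
    intro k
    have : F^[k+1] ⟨x, hx⟩ = F (F^[k] ⟨x, hx⟩) := Function.iterate_succ_apply' F k _
    simpa [ha, this] using hF (F^[k] ⟨x, hx⟩)
  choose n hnX hlt heq using fun k => (hr k).2.2
  have hfree : ∀ k, BFree B (a k) := fun k => (hr k).1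
  have hsubX : ∀ k, (↑(a k) : Set ℕ) ⊆ X := fun k => (hr k).2.1
  have hmono : ∀ k m, k ≤ m → a k ⊆ a m := by
    intro k m hkm
    induction m, hkm using Nat.le_induction with
    | base => exact subset_rfl
    | succ m _ ih => rw [heq m]; exact ih.trans (Finset.subset_insert _ _)
  have hnmem : ∀ k, n k ∈ a (k+1) := by
    intro k; rw [heq k]; exact Finset.mem_insert_self _ _
  have hnsm : StrictMono n := by
    refine strictMono_nat_of_lt_succ fun k => ?_
    exact hlt (k+1) (n k) (hnmem k)
  set U : Set ℕ := ⋃ k, (↑(a k) : Set ℕ) with hU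
  have hUX : U ⊆ X := Set.iUnion_subset fun k => hsubX k
  have hUinf : U.Infinite := by
    refine Set.infinite_of_injective_forall_mem (f := n) hnsm.injective fun k => ?_
    exact Set.mem_iUnion.2 ⟨k+1, by exact_mod_cast hnmem k⟩
  obtain ⟨b, hbB, hbU, -⟩ := hB.2.2 U hUX hUinf
  have haux : ∀ b : Finset ℕ, (↑b : Set ℕ) ⊆ U → ∃ k, ∀ y ∈ b, y ∈ a k := by
    classical
    intro b
    induction b using Finset.induction_on with
    | empty => exact fun _ => ⟨0, by simp⟩
    | @insert z b' hzb ih =>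
      intro hsub
      have hz : (z : ℕ) ∈ U := hsub (by simp)
      obtain ⟨k1, hk1⟩ := Set.mem_iUnion.1 hz
      obtain ⟨k2, hk2⟩ := ih (fun y hy => hsub (by
        simp only [Finset.coe_insert, Set.mem_insert_iff]
        exact Or.inr hy))
      refine ⟨max k1 k2, fun y hy => ?_⟩
      rcases Finset.mem_insert.1 hy with rfl | hy
      · exact hmono k1 _ (le_max_left _ _) hk1
      · exact hmono k2 _ (le_max_right _ _) (hk2 y hy)
  obtain ⟨k, hk⟩ := haux b hbU
  exact hfree k b hbB (fun y hy => hk y hy)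

lemma barrier_homog (B : Set (Finset ℕ)) (X : Set ℕ) (hB : IsBarrierOn B X)
    (g : Finset ℕ → Bool) (s : Finset ℕ) :
    ∀ Y : Set ℕ, Y ⊆ X → Y.Infinite → (↑s : Set ℕ) ⊆ X → (∀ x ∈ s, ∀ y ∈ Y, x < y) →
    ∃ Z, Z ⊆ Y ∧ Z.Infinite ∧ ∃ c, ∀ t ∈ B, s ⊆ t → (↑(t \ s) : Set ℕ) ⊆ Z → g t = c := by
  classical
  induction s using (extRel_wf B X hB).induction with
  | _ s IH =>
  intro Y hYX hYinf hsX hslt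
  by_cases hfr : ∃ b ∈ B, b ⊆ s
  · obtain ⟨b, hbB, hbs⟩ := hfr
    by_cases hbe : b = s
    · subst hbe
      refine ⟨Y, subset_rfl, hYinf, g b, fun t htB hst _ => ?_⟩
      have : b = t := by
        by_contra hne
        exact hB.2.1 b hbB t htB (Finset.ssubset_iff_subset_ne.2 ⟨hst, hne⟩)
      rw [this]
    · refine ⟨Y, subset_rfl, hYinf, true, fun t htB hst _ => ?_⟩
      exfalso
      have hbt : b ⊂ t := by
        refine Finset.ssubset_iff_subset_ne.2 ⟨hbs.trans hst, ?_⟩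
        rintro rfl
        exact hbe (Finset.Subset.antisymm hbs hst)
      exact hB.2.1 b hbB t htB hbt
  · -- s is B-free
    push_neg at hfr
    have hfree : BFree B s := fun b hb => hfr b hb
    -- key step: from any infinite W ⊆ Y we can localize at its minimum
    have key : ∀ W : Set ℕ, W ⊆ Y → W.Infinite →
        ∃ Z c, Z ⊆ W ∩ Set.Ioi (sInf W) ∧ Z.Infinite ∧
          ∀ t ∈ B, insert (sInf W) s ⊆ t →
            (↑(t \ insert (sInf W) s) : Set ℕ) ⊆ Z → g t = c := by
      intro W hWY hWinf
      have hmemW : sInf W ∈ W := Nat.sInf_mem hWinf.nonempty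
      have hrel : ExtRel B X (insert (sInf W) s) s :=
        ⟨hfree, hsX, sInf W, hYX (hWY hmemW), fun x hx => hslt x hx _ (hWY hmemW), rfl⟩
      have hW'sub : W ∩ Set.Ioi (sInf W) ⊆ X := fun y hy => hYX (hWY hy.1)
      have hW'inf : (W ∩ Set.Ioi (sInf W)).Infinite := by
        have : W ∩ Set.Ioi (sInf W) = W \ Set.Iic (sInf W) := by
          ext y
          simp only [Set.mem_inter_iff, Set.mem_Ioi, Set.mem_diff, Set.mem_Iic, not_le]
        rw [this]
        exact hWinf.diff (Set.finite_Iic _)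
      have hins : (↑(insert (sInf W) s) : Set ℕ) ⊆ X := by
        intro y hy
        rcases Finset.mem_insert.1 (by exact_mod_cast hy) with rfl | hy'
        · exact hYX (hWY hmemW)
        · exact hsX (by exact_mod_cast hy')
      have hlt' : ∀ x ∈ insert (sInf W) s, ∀ y ∈ W ∩ Set.Ioi (sInf W), x < y := by
        intro x hx y hy
        rcases Finset.mem_insert.1 hx with rfl | hx'
        · exact hy.2
        · exact hslt x hx' y (hWY hy.1)
      obtain ⟨Z, hZsub, hZinf, c, hc⟩ :=
        IH (insert (sInf W) s) hrel (W ∩ Set.Ioi (sInf W)) hW'sub hW'inf hins hlt'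
      exact ⟨Z, c, hZsub, hZinf, hc⟩
    choose! Zf cf hZsub hZinf hprop using key
    -- build the fusion sequence
    set Ys : ℕ → Set ℕ := fun i => Zf^[i] Y with hYs
    have hinv : ∀ i, Ys i ⊆ Y ∧ (Ys i).Infinite := by
      intro i
      induction i with
      | zero => exact ⟨subset_rfl, hYinf⟩
      | succ i ih =>
        have hstep : Ys (i+1) = Zf (Ys i) := Function.iterate_succ_apply' _ _ _
        constructor
        · rw [hstep]
          exact ((hZsub _ ih.1 ih.2).trans (Set.inter_subset_left)).trans ih.1
        · rw [hstep]; exact hZinf _ ih.1 ih.2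
    set nn : ℕ → ℕ := fun i => sInf (Ys i) with hnn
    have hstep : ∀ i, Ys (i+1) = Zf (Ys i) := fun i => Function.iterate_succ_apply' _ _ _
    have hsucc : ∀ i, Ys (i+1) ⊆ Ys i ∩ Set.Ioi (nn i) := by
      intro i; rw [hstep i]; exact hZsub _ (hinv i).1 (hinv i).2
    have hmem : ∀ i, nn i ∈ Ys i := fun i => Nat.sInf_mem (hinv i).2.nonempty
    have hchain : ∀ i j, i ≤ j → Ys j ⊆ Ys i := by
      intro i j hij
      induction j, hij using Nat.le_induction with
      | base => exact subset_rfl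
      | succ j _ ih => exact ((hsucc j).trans Set.inter_subset_left).trans ih
    have hnsm : StrictMono nn := by
      refine strictMono_nat_of_lt_succ fun i => ?_
      exact ((hsucc i) (hmem (i+1))).2
    have hcolor : ∀ i, ∀ t ∈ B, insert (nn i) s ⊆ t →
        (↑(t \ insert (nn i) s) : Set ℕ) ⊆ Ys (i+1) → g t = cf (Ys i) := by
      intro i
      rw [hstep i]
      exact hprop _ (hinv i).1 (hinv i).2
    -- pigeonhole on colors
    have : ∃ bcol : Bool, {i : ℕ | cf (Ys i) = bcol}.Infinite := by
      by_contra h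
      push_neg at h
      have : (Set.univ : Set ℕ).Finite := by
        have : (Set.univ : Set ℕ) ⊆ {i | cf (Ys i) = true} ∪ {i | cf (Ys i) = false} := by
          intro i _
          rcases Bool.eq_false_or_eq_true (cf (Ys i)) with h1 | h1
          · exact Or.inl h1
          · exact Or.inr h1
        exact Set.Finite.subset ((h true).union (h false)) this
      exact Set.infinite_univ this
    obtain ⟨bcol, hI⟩ := this
    refine ⟨nn '' {i | cf (Ys i) = bcol}, ?_, hI.image (hnsm.injective.injOn), bcol, ?_⟩
    · rintro y ⟨i, -, rfl⟩
      exact (hinv i).1 (hmem i)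
    · intro t htB hst hts
      have hne : (t \ s).Nonempty := by
        rw [Finset.sdiff_nonempty]
        intro hts'
        exact hfree t htB hts'
      set m : ℕ := (t \ s).min' hne with hm
      have hmmem : m ∈ t \ s := Finset.min'_mem _ _
      obtain ⟨i, hiI, hmi⟩ : ∃ i, cf (Ys i) = bcol ∧ nn i = m := by
        have : (m : ℕ) ∈ nn '' {i | cf (Ys i) = bcol} := hts (by exact_mod_cast hmmem)
        obtain ⟨i, hi, hii⟩ := this
        exact ⟨i, hi, hii⟩
      have hins : insert (nn i) s ⊆ t := by
        rw [hmi]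
        intro y hy
        rcases Finset.mem_insert.1 hy with rfl | hy'
        · exact (Finset.mem_sdiff.1 hmmem).1
        · exact hst hy'
      have hsub2 : (↑(t \ insert (nn i) s) : Set ℕ) ⊆ Ys (i+1) := by
        intro y hy
        have hy' : y ∈ t \ insert (nn i) s := by exact_mod_cast hy
        have hyts : y ∈ t \ s := by
          rw [Finset.mem_sdiff] at hy' ⊢
          exact ⟨hy'.1, fun hc => hy'.2 (Finset.mem_insert_of_mem hc)⟩
        have hyZ : (y : ℕ) ∈ nn '' {i | cf (Ys i) = bcol} := hts (by exact_mod_cast hyts)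
        obtain ⟨j, -, rfl⟩ := hyZ
        have hne2 : nn j ≠ nn i := by
          intro hc
          apply (Finset.mem_sdiff.1 hy').2
          rw [hc]
          exact Finset.mem_insert_self _ _
        have hge : nn i ≤ nn j := by
          rw [hmi]
          exact Finset.min'_le _ _ hyts
        have hij : i < j := hnsm.lt_iff_lt.1 (lt_of_le_of_ne hge (Ne.symm hne2))
        exact hchain (i+1) j hij (hmem j)
      rw [hcolor i t htB hins hsub2, hiI]

theorem barrier_thin_set (B : Set (Finset ℕ)) (X : Set ℕ) (hX : X.Infinite)
    (hB : IsBarrierOn B X) (f : Finset ℕ → ℕ) :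
    ∃ H : Set ℕ, H ⊆ X ∧ H.Infinite ∧
      ∃ c : ℕ, ∀ s ∈ B, ↑s ⊆ H → f s ≠ c := by
  classical
  obtain ⟨Z, hZX, hZinf, c, hc⟩ :=
    barrier_homog B X hB (fun t => decide (f t = 0)) ∅ X subset_rfl hX (by simp) (by simp)
  cases c with
  | false =>
    refine ⟨Z, hZX, hZinf, 0, fun s hsB hsZ => ?_⟩
    have := hc s hsB (Finset.empty_subset s) (by simpa using hsZ)
    simpa using this
  | true =>
    refine ⟨Z, hZX, hZinf, 1, fun s hsB hsZ => ?_⟩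
    have := hc s hsB (Finset.empty_subset s) (by simpa using hsZ)
    simp only [decide_eq_true_eq] at this
    omega
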